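/- Let T ∈ L(H)^d be a pure K-contraction with canonical dilation j : H → H_K(𝒟) and let M = H_K(𝒟) ⊖ Im j. Then M is invariant under each M_{z_i}, and a function f ∈ H_K(𝒟) belongs to the wandering subspace W(M) = M ⊖ Σ_i M_{z_i}M if and only if j^*f = 0 and (1 − jj^*)M_{z_i}^* f = 0 for i = 1,...,d. -/

import Mathlib

set_option maxHeartbeats 1000000
open Filter Topology
open scoped InnerProductSpace

/-- for a pure K-contraction `T` with canonical dilation `j` and
`M = H_K(𝒟) ⊖ Im j`, the space `M` is `M_z`-invariant and `f` lies in the wandering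
subspace `W(M) = M ⊖ Σᵢ M_{zᵢ}M` iff `j^*f = 0` and `(1 − jj^*)M_{zᵢ}^*f = 0` for all `i`. -/
theorem stmt11 {d : ℕ} {𝒟 HK H : Type*}
    [NormedAddCommGroup 𝒟] [InnerProductSpace ℂ 𝒟] [CompleteSpace 𝒟]
    [NormedAddCommGroup HK] [InnerProductSpace ℂ HK] [CompleteSpace HK]
    [NormedAddCommGroup H] [InnerProductSpace ℂ H] [CompleteSpace H]
    (a : ℕ → ℝ) (ha0 : a 0 = 1) (hapos : ∀ n, 0 < a n)
    (m M' : ℝ) (hm : 0 < m) (hbd : ∀ n, m ≤ a n / a (n + 1) ∧ a n / a (n + 1) ≤ M')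
    (ev : EuclideanSpace ℂ (Fin d) → (HK →L[ℂ] 𝒟))
    (hsep : ∀ f : HK, (∀ z, ‖z‖ < 1 → ev z f = 0) → f = 0)
    (hkernel : ∀ z w : EuclideanSpace ℂ (Fin d), ‖z‖ < 1 → ‖w‖ < 1 → ∀ x : 𝒟,
      HasSum (fun n => ((a n : ℂ) * ⟪w, z⟫_ℂ ^ n) • x) (ev z ((ev w).adjoint x)))
    (Mz : Fin d → HK →L[ℂ] HK)
    (hMz : ∀ (i) (z), ‖z‖ < 1 → ∀ f, ev z (Mz i f) = z i • ev z f)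
    -- T is a pure K-contraction
    (T : Fin d → H →L[ℂ] H) (hT : ∀ i j, Commute (T i) (T j))
    (c : ℕ → ℝ) (hc0 : c 0 = 1)
    (hcauchy : ∀ n, 1 ≤ n → ∑ j ∈ Finset.range (n + 1), a j * c (n - j) = 0)
    (σit : (H →L[ℂ] H) → ℕ → (H →L[ℂ] H))
    (hσ0 : ∀ X, σit X 0 = X)
    (hσs : ∀ X n, σit X (n + 1) = ∑ i, T i ∘L σit X n ∘L (T i).adjoint)
    (D0 : H →L[ℂ] H) (hD0pos : D0.IsPositive)
    (hD0 : ∀ x : H, HasSum (fun n => ((c n : ℝ) : ℂ) • σit 1 n x) (D0 x))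
    (hpure : ∀ x : H, Tendsto (fun N => ∑ n ∈ Finset.range N, ((a n : ℝ) : ℂ) • σit D0 n x)
      atTop (𝓝 x))
    (C : H →L[ℂ] 𝒟) (hCC : C.adjoint ∘L C = D0) (hCdense : DenseRange C)
    -- the canonical K-dilation j
    (j : H →L[ℂ] HK) (hjiso : ∀ h, ‖j h‖ = ‖h‖)
    (hj : ∀ (h : H) (z), ‖z‖ < 1 →
      HasSum (fun n => ((a n : ℝ) : ℂ) • C (((∑ i, z i • (T i).adjoint) ^ n) h))
        (ev z (j h)))
    (hjint : ∀ i, j ∘L (T i).adjoint = (Mz i).adjoint ∘L j) :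
    -- M = (Im j)^⊥ is invariant under each M_{zᵢ}
    (∀ i, Submodule.map (Mz i : HK →ₗ[ℂ] HK) (LinearMap.range (j : H →ₗ[ℂ] HK))ᗮ ≤ (LinearMap.range (j : H →ₗ[ℂ] HK))ᗮ) ∧
    -- membership in the wandering subspace W(M) = M ⊖ Σᵢ M_{zᵢ}M
    ∀ f : HK,
      (f ∈ (LinearMap.range (j : H →ₗ[ℂ] HK))ᗮ ⊓
          (⨆ i, Submodule.map (Mz i : HK →ₗ[ℂ] HK) (LinearMap.range (j : H →ₗ[ℂ] HK))ᗮ)ᗮ) ↔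
        (j.adjoint f = 0 ∧
          ∀ i, (Mz i).adjoint f - j (j.adjoint ((Mz i).adjoint f)) = 0) := by
  classical
  set Mm : Submodule ℂ HK := (LinearMap.range (j : H →ₗ[ℂ] HK))ᗮ with hMm
  -- j is isometric, hence j* j = 1
  have hinner : ∀ h h' : H, ⟪j h, j h'⟫_ℂ = ⟪h, h'⟫_ℂ := by
    intro h h'
    exact LinearIsometry.inner_map_map ⟨(j : H →ₗ[ℂ] HK), hjiso⟩ h h'
  have hjj : ∀ h : H, j.adjoint (j h) = h := by
    intro h
    apply ext_inner_right ℂ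
    intro h'
    rw [ContinuousLinearMap.adjoint_inner_left]
    exact hinner h h'
  -- membership in M
  have hmemM : ∀ f : HK, f ∈ Mm ↔ j.adjoint f = 0 := by
    intro f
    rw [hMm, Submodule.mem_orthogonal]
    constructor
    · intro hf
      have h0 : ⟪j (j.adjoint f), f⟫_ℂ = 0 := hf _ ⟨_, rfl⟩
      have h1 : ⟪j.adjoint f, j.adjoint f⟫_ℂ = 0 := by
        rw [ContinuousLinearMap.adjoint_inner_left, ← inner_conj_symm, h0, map_zero]
      exact inner_self_eq_zero.mp h1
    · rintro hf _ ⟨h, rfl⟩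
      rw [ContinuousLinearMap.coe_coe, ← ContinuousLinearMap.adjoint_inner_right, hf, inner_zero_right]
  -- membership in Mᗮᗮ (closure of range j)
  have hproj : ∀ x : HK, x ∈ Mmᗮ ↔ x - j (j.adjoint x) = 0 := by
    intro x
    rw [hMm, Submodule.orthogonal_orthogonal_eq_closure, ← SetLike.mem_coe,
      Submodule.topologicalClosure_coe]
    constructor
    · intro hx
      have hcl : (LinearMap.range (j : H →ₗ[ℂ] HK) : Set HK) ⊆ {y : HK | y - j (j.adjoint y) = 0} := by
        rintro _ ⟨h, rfl⟩
        simp [hjj]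
      have hclosed : IsClosed {y : HK | y - j (j.adjoint y) = 0} :=
        isClosed_eq (continuous_id.sub (j.continuous.comp j.adjoint.continuous))
          continuous_const
      exact closure_minimal hcl hclosed hx
    · intro hx
      have hx' : x = j (j.adjoint x) := by rwa [sub_eq_zero] at hx
      have : x ∈ (LinearMap.range (j : H →ₗ[ℂ] HK) : Set HK) := ⟨j.adjoint x, hx'.symm⟩
      exact subset_closure this
  -- invariance of M under Mz i
  have hinv : ∀ i, Submodule.map (Mz i : HK →ₗ[ℂ] HK) Mm ≤ Mm := by
    intro i y hy
    rcases hy with ⟨g, hg, rfl⟩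
    rw [hMm, Submodule.mem_orthogonal]
    rintro _ ⟨h, rfl⟩
    have h1 : ⟪j h, Mz i g⟫_ℂ = ⟪(Mz i).adjoint (j h), g⟫_ℂ := by
      rw [ContinuousLinearMap.adjoint_inner_left]
    have h2 : (Mz i).adjoint (j h) = j ((T i).adjoint h) := by
      have := congrArg (fun A : H →L[ℂ] HK => A h) (hjint i)
      simpa using this.symm
    rw [ContinuousLinearMap.coe_coe, ContinuousLinearMap.coe_coe, h1, h2]
    exact (Submodule.mem_orthogonal _ g).mp hg _ ⟨(T i).adjoint h, rfl⟩
  refine ⟨hinv, fun f => ?_⟩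
  have hperp : ∀ i, f ∈ (Submodule.map (Mz i : HK →ₗ[ℂ] HK) Mm)ᗮ ↔ (Mz i).adjoint f ∈ Mmᗮ := by
    intro i
    rw [Submodule.mem_orthogonal, Submodule.mem_orthogonal]
    constructor
    · intro hf g hg
      have := hf (Mz i g) ⟨g, hg, rfl⟩
      rwa [← ContinuousLinearMap.adjoint_inner_right] at this
    · rintro hf _ ⟨g, hg, rfl⟩
      rw [ContinuousLinearMap.coe_coe, ← ContinuousLinearMap.adjoint_inner_right]
      exact hf g hg
  constructor
  · rintro ⟨hf1, hf2⟩
    refine ⟨(hmemM f).mp hf1, fun i => ?_⟩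
    have : f ∈ (Submodule.map (Mz i : HK →ₗ[ℂ] HK) Mm)ᗮ := by
      refine (Submodule.orthogonal_le ?_) hf2
      exact le_iSup (fun i => Submodule.map (Mz i : HK →ₗ[ℂ] HK) Mm) i
    exact (hproj _).mp ((hperp i).mp this)
  · rintro ⟨hf1, hf2⟩
    refine ⟨(hmemM f).mpr hf1, ?_⟩
    rw [← Submodule.iInf_orthogonal]
    exact (Submodule.mem_iInf _).mpr fun i => (hperp i).mpr ((hproj _).mpr (hf2 i))
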